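/- For every real number 0 < q < 1, every positive integer k, every real t > 0, and every natural number n, one has [t]_{n,k} = (1/Γ_{q,k}(t)) · ∫_0^b x^{t+nk-1} E_{q^k}^{-q^k x^k/[k]_q} d_q x, where b = [k]_q^{1/k}/(1-q^k)^{1/k} and the Jackson q-integral means (1-q) b ∑_{m=0}^∞ q^m (q^m b)^{t+nk-1} E_{q^k}^{-q^k (q^m b)^k/[k]_q}. -/

import Mathlib

open Real Finset Filter

noncomputable def qc (Q : ℝ) (m : ℕ) : ℝ := ∏ j ∈ Finset.range m, (1 - Q * Q ^ j)

noncomputable def qL (Q a : ℝ) : ℝ := ∑' j : ℕ, Real.log (1 - a * Q ^ j)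

noncomputable def qF (Q z : ℝ) : ℝ := ∑' m : ℕ, z ^ m / qc Q m

noncomputable def qg (Q x : ℝ) : ℝ := ∑' n : ℕ, Q ^ (n * (n - 1) / 2) * x ^ n / qc Q n

section aux
variable {Q a z x : ℝ}

lemma fac_pos (hQ0 : 0 < Q) (hQ1 : Q < 1) (ha0 : 0 ≤ a) (ha1 : a < 1) (j : ℕ) :
    0 < 1 - a * Q ^ j := by
  have h1 : a * Q ^ j ≤ a * 1 :=
    mul_le_mul_of_nonneg_left (pow_le_one₀ hQ0.le hQ1.le) ha0
  nlinarith

lemma summable_logfac (hQ0 : 0 < Q) (hQ1 : Q < 1) (ha0 : 0 ≤ a) (ha1 : a < 1) :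
    Summable fun j : ℕ => Real.log (1 - a * Q ^ j) := by
  apply Summable.of_norm_bounded (g := fun j => (a / (1 - a)) * Q ^ j)
    ((summable_geometric_of_lt_one hQ0.le hQ1).mul_left _)
  intro j
  have hp := fac_pos hQ0 hQ1 ha0 ha1 j
  have hqj : Q ^ j ≤ 1 := pow_le_one₀ hQ0.le hQ1.le
  have haj : 0 ≤ a * Q ^ j := mul_nonneg ha0 (pow_nonneg hQ0.le j)
  have haj1 : a * Q ^ j ≤ a := mul_le_of_le_one_right ha0 hqj
  have h1 : Real.log (1 - a * Q ^ j) ≤ 0 := Real.log_nonpos (by linarith) (by linarith)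
  rw [Real.norm_eq_abs, abs_of_nonpos h1]
  have h2 : Real.log (1 - a * Q ^ j)⁻¹ ≤ (1 - a * Q ^ j)⁻¹ - 1 :=
    Real.log_le_sub_one_of_pos (by positivity)
  rw [Real.log_inv] at h2
  have h3 : (1 - a * Q ^ j)⁻¹ - 1 = (a * Q ^ j) / (1 - a * Q ^ j) := by
    field_simp
    ring
  rw [h3] at h2
  have h4 : (a * Q ^ j) / (1 - a * Q ^ j) ≤ (a * Q ^ j) / (1 - a) := by
    gcongr
    all_goals linarith
  calc -Real.log (1 - a * Q ^ j) ≤ (a * Q ^ j) / (1 - a * Q ^ j) := by linarith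
    _ ≤ (a * Q ^ j) / (1 - a) := h4
    _ = a / (1 - a) * Q ^ j := by ring

lemma hasProd_exp (f : ℕ → ℝ) (hf : ∀ j, 0 < f j) (h : Summable fun j => Real.log (f j)) :
    HasProd f (Real.exp (∑' j, Real.log (f j))) := by
  have h2 := h.hasSum.rexp
  have h3 : (rexp ∘ fun j => Real.log (f j)) = f := by
    funext j; exact Real.exp_log (hf j)
  rwa [h3] at h2

lemma hasProd_fac (hQ0 : 0 < Q) (hQ1 : Q < 1) (ha0 : 0 ≤ a) (ha1 : a < 1) :
    HasProd (fun j : ℕ => 1 - a * Q ^ j) (Real.exp (qL Q a)) :=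
  hasProd_exp _ (fac_pos hQ0 hQ1 ha0 ha1) (summable_logfac hQ0 hQ1 ha0 ha1)

lemma qL_shift (hQ0 : 0 < Q) (hQ1 : Q < 1) (ha0 : 0 ≤ a) (ha1 : a < 1) (N : ℕ) :
    qL Q a = (∑ j ∈ Finset.range N, Real.log (1 - a * Q ^ j)) + qL Q (a * Q ^ N) := by
  rw [qL, qL, ← Summable.sum_add_tsum_nat_add N (summable_logfac hQ0 hQ1 ha0 ha1)]
  congr 1
  apply tsum_congr; intro j
  congr 2
  rw [pow_add]; ring

lemma qL_nonpos (hQ0 : 0 < Q) (hQ1 : Q < 1) (ha0 : 0 ≤ a) (ha1 : a < 1) : qL Q a ≤ 0 := by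
  apply tsum_nonpos
  intro j
  have hp := fac_pos hQ0 hQ1 ha0 ha1 j
  have haj : 0 ≤ a * Q ^ j := mul_nonneg ha0 (pow_nonneg hQ0.le j)
  exact Real.log_nonpos (by linarith) (by linarith)

lemma qc_pos (hQ0 : 0 < Q) (hQ1 : Q < 1) (m : ℕ) : 0 < qc Q m :=
  Finset.prod_pos fun j _ => fac_pos hQ0 hQ1 hQ0.le hQ1 j

lemma d_eq (hQ0 : 0 < Q) (hQ1 : Q < 1) (m : ℕ) :
    Real.exp (qL Q Q) = qc Q m * Real.exp (qL Q (Q * Q ^ m)) := by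
  rw [qL_shift hQ0 hQ1 hQ0.le hQ1 m, Real.exp_add]
  congr 1
  rw [Real.exp_sum]
  exact (Finset.prod_congr rfl fun j _ => (Real.exp_log (fac_pos hQ0 hQ1 hQ0.le hQ1 j)).symm).symm

lemma d_le_qc (hQ0 : 0 < Q) (hQ1 : Q < 1) (m : ℕ) : Real.exp (qL Q Q) ≤ qc Q m := by
  rw [d_eq hQ0 hQ1 m]
  have h1 : Real.exp (qL Q (Q * Q ^ m)) ≤ 1 := by
    rw [Real.exp_le_one_iff]
    exact qL_nonpos hQ0 hQ1 (by positivity)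
      (lt_of_le_of_lt (mul_le_of_le_one_right hQ0.le (pow_le_one₀ hQ0.le hQ1.le)) hQ1)
  nlinarith [qc_pos hQ0 hQ1 m, Real.exp_pos (qL Q (Q * Q ^ m))]

lemma summable_qF (hQ0 : 0 < Q) (hQ1 : Q < 1) (hz : |z| < 1) :
    Summable fun m : ℕ => z ^ m / qc Q m := by
  apply Summable.of_norm_bounded (g := fun m => (Real.exp (qL Q Q))⁻¹ * |z| ^ m)
    ((summable_geometric_of_lt_one (abs_nonneg z) hz).mul_left _)
  intro m
  rw [norm_div, Real.norm_eq_abs, Real.norm_eq_abs, abs_pow,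
    abs_of_pos (qc_pos hQ0 hQ1 m), inv_mul_eq_div]
  gcongr
  exact d_le_qc hQ0 hQ1 m

lemma qF_eq (hQ0 : 0 < Q) (hQ1 : Q < 1) (hz : |z| < 1) :
    qF Q z = 1 + ∑' m : ℕ, z ^ (m + 1) / qc Q (m + 1) := by
  rw [qF, Summable.tsum_eq_zero_add (summable_qF hQ0 hQ1 hz)]
  congr 1
  simp [qc]

lemma qF_fe (hQ0 : 0 < Q) (hQ1 : Q < 1) (hz0 : 0 ≤ z) (hz : z < 1) :
    qF Q z * (1 - z) = qF Q (z * Q) := by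
  have hza : |z| < 1 := by rwa [abs_of_nonneg hz0]
  have hzQ0 : 0 ≤ z * Q := mul_nonneg hz0 hQ0.le
  have hzQa : |z * Q| < 1 := by
    rw [abs_of_nonneg hzQ0]
    nlinarith
  have hs := summable_qF hQ0 hQ1 hza
  have hs1 : Summable fun m : ℕ => z ^ (m + 1) / qc Q (m + 1) :=
    hs.comp_injective (add_left_injective 1)
  have hs2 : Summable fun m : ℕ => z ^ (m + 1) / qc Q m := by
    refine (hs.mul_left z).congr fun m => ?_
    rw [pow_succ]; ring
  have key : ∀ m : ℕ, z ^ (m + 1) / qc Q (m + 1) - z ^ (m + 1) / qc Q m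
      = (z * Q) ^ (m + 1) / qc Q (m + 1) := by
    intro m
    have hc : qc Q (m + 1) = qc Q m * (1 - Q * Q ^ m) := Finset.prod_range_succ _ m
    have h1 : qc Q m ≠ 0 := (qc_pos hQ0 hQ1 m).ne'
    have h2 : (1 - Q * Q ^ m) ≠ 0 := (fac_pos hQ0 hQ1 hQ0.le hQ1 m).ne'
    rw [hc]
    field_simp
    ring
  calc qF Q z * (1 - z) = qF Q z - z * qF Q z := by ring
    _ = (1 + ∑' m : ℕ, z ^ (m + 1) / qc Q (m + 1)) - ∑' m : ℕ, z ^ (m + 1) / qc Q m := by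
        have hzF : z * qF Q z = ∑' m : ℕ, z ^ (m + 1) / qc Q m := by
          simp only [qF]
          rw [← tsum_mul_left]
          exact tsum_congr fun m => by rw [pow_succ]; ring
        rw [hzF, qF_eq hQ0 hQ1 hza]
    _ = 1 + ∑' m : ℕ, (z ^ (m + 1) / qc Q (m + 1) - z ^ (m + 1) / qc Q m) := by
        rw [add_sub_assoc, Summable.tsum_sub hs1 hs2]
    _ = 1 + ∑' m : ℕ, (z * Q) ^ (m + 1) / qc Q (m + 1) := by
        rw [tsum_congr key]
    _ = qF Q (z * Q) := (qF_eq hQ0 hQ1 hzQa).symm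

lemma qF_prod (hQ0 : 0 < Q) (hQ1 : Q < 1) (hz0 : 0 ≤ z) (hz : z < 1) (N : ℕ) :
    qF Q z * ∏ j ∈ Finset.range N, (1 - z * Q ^ j) = qF Q (z * Q ^ N) := by
  induction N with
  | zero => simp
  | succ N ih =>
    rw [Finset.prod_range_succ, ← mul_assoc, ih]
    have h1 : 0 ≤ z * Q ^ N := mul_nonneg hz0 (pow_nonneg hQ0.le N)
    have h2 : z * Q ^ N < 1 :=
      lt_of_le_of_lt (mul_le_of_le_one_right hz0 (pow_le_one₀ hQ0.le hQ1.le)) hz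
    rw [qF_fe hQ0 hQ1 h1 h2, pow_succ, ← mul_assoc]

lemma qF_near_one (hQ0 : 0 < Q) (hQ1 : Q < 1) {w : ℝ} (hw0 : 0 ≤ w) (hw : w ≤ 1 / 2) :
    |qF Q w - 1| ≤ 2 * (Real.exp (qL Q Q))⁻¹ * w := by
  have hwa : |w| < 1 := by rw [abs_of_nonneg hw0]; linarith
  set d := Real.exp (qL Q Q) with hd
  have hdpos : 0 < d := Real.exp_pos _
  have h1 : qF Q w - 1 = ∑' m : ℕ, w ^ (m + 1) / qc Q (m + 1) := by
    rw [qF_eq hQ0 hQ1 hwa]; ring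
  rw [h1]
  have hgeom : HasSum (fun m : ℕ => (w / d) * w ^ m) ((w / d) * (1 - w)⁻¹) :=
    (hasSum_geometric_of_lt_one hw0 (by linarith)).mul_left _
  have h2 : ‖∑' m : ℕ, w ^ (m + 1) / qc Q (m + 1)‖ ≤ (w / d) * (1 - w)⁻¹ := by
    apply tsum_of_norm_bounded hgeom
    intro m
    rw [norm_div, Real.norm_eq_abs, Real.norm_eq_abs, abs_pow, abs_of_nonneg hw0,
      abs_of_pos (qc_pos hQ0 hQ1 (m + 1))]
    calc w ^ (m + 1) / qc Q (m + 1) ≤ w ^ (m + 1) / d := by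
          gcongr
          exact d_le_qc hQ0 hQ1 (m + 1)
      _ = (w / d) * w ^ m := by rw [pow_succ]; ring
  rw [Real.norm_eq_abs] at h2
  have h3 : (1 - w)⁻¹ ≤ 2 := by
    rw [inv_le_comm₀ (by linarith) (by norm_num)]
    linarith
  calc |∑' m : ℕ, w ^ (m + 1) / qc Q (m + 1)| ≤ (w / d) * (1 - w)⁻¹ := h2
    _ ≤ (w / d) * 2 := by
        apply mul_le_mul_of_nonneg_left h3 (by positivity)
    _ = 2 * d⁻¹ * w := by ring

lemma qF_tendsto (hQ0 : 0 < Q) (hQ1 : Q < 1) (hz0 : 0 ≤ z) (hz : z < 1) :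
    Tendsto (fun N : ℕ => qF Q (z * Q ^ N)) atTop (nhds 1) := by
  have hw : Tendsto (fun N : ℕ => z * Q ^ N) atTop (nhds 0) := by
    simpa using (tendsto_pow_atTop_nhds_zero_of_lt_one hQ0.le hQ1).const_mul z
  have h0 : Tendsto (fun N : ℕ => qF Q (z * Q ^ N) - 1) atTop (nhds 0) := by
    apply squeeze_zero_norm'
    · filter_upwards [hw.eventually_lt_const (show (0:ℝ) < 1/2 by norm_num)] with N hN
      exact qF_near_one hQ0 hQ1 (mul_nonneg hz0 (pow_nonneg hQ0.le N)) hN.le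
    · simpa using hw.const_mul (2 * (Real.exp (qL Q Q))⁻¹)
  have := h0.add_const 1
  simpa using this

lemma qF_mul_exp (hQ0 : 0 < Q) (hQ1 : Q < 1) (hz0 : 0 ≤ z) (hz : z < 1) :
    qF Q z * Real.exp (qL Q z) = 1 := by
  have hp := (hasProd_fac hQ0 hQ1 hz0 hz).tendsto_prod_nat
  have h1 : Tendsto (fun N : ℕ => qF Q z * ∏ j ∈ Finset.range N, (1 - z * Q ^ j)) atTop
      (nhds (qF Q z * Real.exp (qL Q z))) := hp.const_mul _
  have h2 : Tendsto (fun N : ℕ => qF Q z * ∏ j ∈ Finset.range N, (1 - z * Q ^ j)) atTop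
      (nhds 1) := by
    apply (qF_tendsto hQ0 hQ1 hz0 hz).congr
    intro N
    exact (qF_prod hQ0 hQ1 hz0 hz N).symm
  exact tendsto_nhds_unique h1 h2

lemma tri_eq (n : ℕ) : n * (n - 1) / 2 + n = (n + 1) * n / 2 := by
  have h : (n + 1) * n = n * (n - 1) + n * 2 := by
    cases n with
    | zero => rfl
    | succ m => simp [Nat.succ_sub_one]; ring
  omega

lemma tri_ge_pred (n : ℕ) : n - 1 ≤ n * (n - 1) / 2 := by
  rw [Nat.le_div_iff_mul_le (by norm_num : 0 < (2:ℕ))]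
  cases n with
  | zero => simp
  | succ m =>
    simp only [Nat.add_sub_cancel]
    cases m with
    | zero => simp
    | succ l =>
      calc (l + 1) * 2 ≤ (l + 1) * (l + 2) := Nat.mul_le_mul_left _ (by omega)
        _ = (l + 1 + 1) * (l + 1) := by ring

lemma tri_ge (n : ℕ) : n ≤ (n + 1) * n / 2 := by
  have := tri_eq n
  omega

lemma pow_sub_one_le (hQ0 : 0 < Q) (hQ1 : Q < 1) (n : ℕ) : Q ^ (n - 1) ≤ Q⁻¹ * Q ^ n := by
  cases n with
  | zero =>
    simp only [Nat.zero_sub, pow_zero, mul_one]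
    have h := mul_inv_cancel₀ hQ0.ne'
    nlinarith [inv_pos.2 hQ0]
  | succ m =>
    have h : Q⁻¹ * Q ^ (m + 1) = Q ^ m := by
      field_simp [pow_succ]
      ring
    simp only [Nat.add_sub_cancel, h, le_refl]

lemma summable_qg (hQ0 : 0 < Q) (hQ1 : Q < 1) (hx : |x| ≤ 1) :
    Summable fun n : ℕ => Q ^ (n * (n - 1) / 2) * x ^ n / qc Q n := by
  set d := Real.exp (qL Q Q) with hd
  have hdpos : 0 < d := Real.exp_pos _
  apply Summable.of_norm_bounded (g := fun n => (Q⁻¹ * d⁻¹) * Q ^ n)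
    ((summable_geometric_of_lt_one hQ0.le hQ1).mul_left _)
  intro n
  have h1 : ‖Q ^ (n * (n - 1) / 2) * x ^ n / qc Q n‖
      = Q ^ (n * (n - 1) / 2) * |x| ^ n / qc Q n := by
    rw [norm_div, norm_mul, Real.norm_eq_abs, Real.norm_eq_abs, Real.norm_eq_abs,
      abs_pow, abs_pow, abs_of_pos hQ0, abs_of_pos (qc_pos hQ0 hQ1 n)]
  rw [h1]
  calc Q ^ (n * (n - 1) / 2) * |x| ^ n / qc Q n
      ≤ Q ^ (n * (n - 1) / 2) * |x| ^ n / d := by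
        gcongr
        exact d_le_qc hQ0 hQ1 n
    _ ≤ Q ^ (n - 1) * 1 / d := by
        have e1 : Q ^ (n * (n - 1) / 2) ≤ Q ^ (n - 1) :=
          pow_le_pow_of_le_one hQ0.le hQ1.le (tri_ge_pred n)
        have e2 : |x| ^ n ≤ 1 := pow_le_one₀ (abs_nonneg x) hx
        have e3 : Q ^ (n * (n - 1) / 2) * |x| ^ n ≤ Q ^ (n - 1) * 1 :=
          mul_le_mul e1 e2 (by positivity) (by positivity)
        have := mul_le_mul_of_nonneg_right e3 (inv_nonneg.2 hdpos.le)
        simpa [div_eq_mul_inv] using this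
    _ ≤ (Q⁻¹ * Q ^ n) * 1 / d := by
        have e4 : Q ^ (n - 1) * 1 ≤ (Q⁻¹ * Q ^ n) * 1 :=
          mul_le_mul_of_nonneg_right (pow_sub_one_le hQ0 hQ1 n) (by norm_num)
        have := mul_le_mul_of_nonneg_right e4 (inv_nonneg.2 hdpos.le)
        simpa [div_eq_mul_inv] using this
    _ = (Q⁻¹ * d⁻¹) * Q ^ n := by ring

lemma qg_eq (hQ0 : 0 < Q) (hQ1 : Q < 1) (hx : |x| ≤ 1) :
    qg Q x = 1 + ∑' n : ℕ, Q ^ ((n + 1) * n / 2) * x ^ (n + 1) / qc Q (n + 1) := by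
  rw [qg, Summable.tsum_eq_zero_add (summable_qg hQ0 hQ1 hx)]
  congr 1
  simp [qc]

lemma qg_fe (hQ0 : 0 < Q) (hQ1 : Q < 1) (hx : |x| ≤ 1) :
    qg Q x = (1 + x) * qg Q (Q * x) := by
  have hQx : |Q * x| ≤ 1 := by
    rw [abs_mul, abs_of_pos hQ0]
    nlinarith [abs_nonneg x]
  have hsx := summable_qg hQ0 hQ1 hx
  have hsQx := summable_qg hQ0 hQ1 hQx
  have hterm : ∀ n : ℕ, Q ^ (n * (n - 1) / 2) * (Q * x) ^ n / qc Q n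
      = Q ^ (n * (n - 1) / 2) * Q ^ n * x ^ n / qc Q n := by
    intro n; rw [mul_pow]; ring
  have hs2 : Summable fun n : ℕ => Q ^ (n * (n - 1) / 2) * Q ^ n * x ^ n / qc Q n :=
    hsQx.congr hterm
  have hsd : Summable fun n : ℕ =>
      Q ^ (n * (n - 1) / 2) * x ^ n / qc Q n
        - Q ^ (n * (n - 1) / 2) * Q ^ n * x ^ n / qc Q n := hsx.sub hs2
  have key2 : ∀ n : ℕ,
      Q ^ ((n+1) * ((n+1) - 1) / 2) * x ^ (n+1) / qc Q (n+1)
        - Q ^ ((n+1) * ((n+1) - 1) / 2) * Q ^ (n+1) * x ^ (n+1) / qc Q (n+1)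
      = Q ^ ((n + 1) * n / 2) * x ^ (n + 1) / qc Q n := by
    intro n
    have hc : qc Q (n + 1) = qc Q n * (1 - Q * Q ^ n) := Finset.prod_range_succ _ n
    have h1 : qc Q n ≠ 0 := (qc_pos hQ0 hQ1 n).ne'
    have h2 : (1 - Q * Q ^ n) ≠ 0 := (fac_pos hQ0 hQ1 hQ0.le hQ1 n).ne'
    rw [Nat.add_sub_cancel, hc]
    field_simp
    ring
  have hdiff : qg Q x - qg Q (Q * x) = x * qg Q (Q * x) := by
    calc qg Q x - qg Q (Q * x)
        = ∑' n : ℕ, (Q ^ (n * (n - 1) / 2) * x ^ n / qc Q n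
            - Q ^ (n * (n - 1) / 2) * Q ^ n * x ^ n / qc Q n) := by
          rw [qg, qg, show (∑' n : ℕ, Q ^ (n * (n - 1) / 2) * (Q * x) ^ n / qc Q n)
            = ∑' n : ℕ, Q ^ (n * (n - 1) / 2) * Q ^ n * x ^ n / qc Q n from tsum_congr hterm,
            ← Summable.tsum_sub hsx hs2]
      _ = (Q ^ (0 * (0 - 1) / 2) * x ^ 0 / qc Q 0
            - Q ^ (0 * (0 - 1) / 2) * Q ^ 0 * x ^ 0 / qc Q 0)
          + ∑' n : ℕ, (Q ^ ((n+1) * ((n+1) - 1) / 2) * x ^ (n+1) / qc Q (n+1)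
            - Q ^ ((n+1) * ((n+1) - 1) / 2) * Q ^ (n+1) * x ^ (n+1) / qc Q (n+1)) := by
          exact Summable.tsum_eq_zero_add hsd
      _ = 0 + ∑' n : ℕ, Q ^ ((n + 1) * n / 2) * x ^ (n + 1) / qc Q n := by
          congr 1
          · simp [qc]
          · exact tsum_congr key2
      _ = x * qg Q (Q * x) := by
          rw [zero_add, qg, ← tsum_mul_left]
          apply tsum_congr
          intro n
          rw [← tri_eq n, pow_add, mul_pow, pow_succ]
          ring
  linarith [hdiff]

lemma qg_near_one (hQ0 : 0 < Q) (hQ1 : Q < 1) {w : ℝ} (hw : |w| ≤ 1) :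
    |qg Q w - 1| ≤ (Real.exp (qL Q Q))⁻¹ * (1 - Q)⁻¹ * |w| := by
  set d := Real.exp (qL Q Q) with hd
  have hdpos : 0 < d := Real.exp_pos _
  have h1 : qg Q w - 1 = ∑' n : ℕ, Q ^ ((n + 1) * n / 2) * w ^ (n + 1) / qc Q (n + 1) := by
    rw [qg_eq hQ0 hQ1 hw]; ring
  rw [h1]
  have hgeom : HasSum (fun n : ℕ => (|w| * d⁻¹) * Q ^ n) ((|w| * d⁻¹) * (1 - Q)⁻¹) :=
    (hasSum_geometric_of_lt_one hQ0.le hQ1).mul_left _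
  have h2 : ‖∑' n : ℕ, Q ^ ((n + 1) * n / 2) * w ^ (n + 1) / qc Q (n + 1)‖
      ≤ (|w| * d⁻¹) * (1 - Q)⁻¹ := by
    apply tsum_of_norm_bounded hgeom
    intro n
    have hn : ‖Q ^ ((n + 1) * n / 2) * w ^ (n + 1) / qc Q (n + 1)‖
        = Q ^ ((n + 1) * n / 2) * |w| ^ (n + 1) / qc Q (n + 1) := by
      rw [norm_div, norm_mul, Real.norm_eq_abs, Real.norm_eq_abs, Real.norm_eq_abs,
        abs_pow, abs_pow, abs_of_pos hQ0, abs_of_pos (qc_pos hQ0 hQ1 (n + 1))]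
    rw [hn]
    calc Q ^ ((n + 1) * n / 2) * |w| ^ (n + 1) / qc Q (n + 1)
        ≤ Q ^ ((n + 1) * n / 2) * |w| ^ (n + 1) / d := by
          gcongr
          exact d_le_qc hQ0 hQ1 (n + 1)
      _ ≤ Q ^ n * |w| ^ 1 / d := by
          have e1 : Q ^ ((n + 1) * n / 2) ≤ Q ^ n :=
            pow_le_pow_of_le_one hQ0.le hQ1.le (tri_ge n)
          have e2 : |w| ^ (n + 1) ≤ |w| ^ 1 :=
            pow_le_pow_of_le_one (abs_nonneg w) hw (by omega)
          have e3 : Q ^ ((n + 1) * n / 2) * |w| ^ (n + 1) ≤ Q ^ n * |w| ^ 1 :=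
            mul_le_mul e1 e2 (by positivity) (by positivity)
          have := mul_le_mul_of_nonneg_right e3 (inv_nonneg.2 hdpos.le)
          simpa [div_eq_mul_inv] using this
      _ = (|w| * d⁻¹) * Q ^ n := by rw [pow_one]; ring
  rw [Real.norm_eq_abs] at h2
  calc |∑' n : ℕ, Q ^ ((n + 1) * n / 2) * w ^ (n + 1) / qc Q (n + 1)|
      ≤ (|w| * d⁻¹) * (1 - Q)⁻¹ := h2
    _ = d⁻¹ * (1 - Q)⁻¹ * |w| := by ring

lemma qg_prod (hQ0 : 0 < Q) (hQ1 : Q < 1) (ha0 : 0 ≤ a) (ha1 : a < 1) (N : ℕ) :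
    qg Q (-a) = (∏ j ∈ Finset.range N, (1 - a * Q ^ j)) * qg Q (-(a * Q ^ N)) := by
  induction N with
  | zero => simp
  | succ N ih =>
    rw [Finset.prod_range_succ, ih]
    have habs : |(-(a * Q ^ N))| ≤ 1 := by
      rw [abs_neg, abs_of_nonneg (by positivity)]
      have := pow_le_one₀ hQ0.le hQ1.le (n := N)
      nlinarith
    have harg : Q * -(a * Q ^ N) = -(a * Q ^ (N + 1)) := by ring
    rw [qg_fe hQ0 hQ1 habs, harg]
    ring

lemma qg_tendsto (hQ0 : 0 < Q) (hQ1 : Q < 1) (ha0 : 0 ≤ a) (ha1 : a < 1) :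
    Tendsto (fun N : ℕ => qg Q (-(a * Q ^ N))) atTop (nhds 1) := by
  have hw : Tendsto (fun N : ℕ => a * Q ^ N) atTop (nhds 0) := by
    simpa using (tendsto_pow_atTop_nhds_zero_of_lt_one hQ0.le hQ1).const_mul a
  have h0 : Tendsto (fun N : ℕ => qg Q (-(a * Q ^ N)) - 1) atTop (nhds 0) := by
    apply squeeze_zero_norm (a := fun N => (Real.exp (qL Q Q))⁻¹ * (1 - Q)⁻¹ * (a * Q ^ N))
    · intro N
      have habs : |(-(a * Q ^ N))| ≤ 1 := by
        rw [abs_neg, abs_of_nonneg (by positivity)]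
        have := pow_le_one₀ hQ0.le hQ1.le (n := N)
        nlinarith
      have := qg_near_one hQ0 hQ1 habs
      rwa [abs_neg, abs_of_nonneg (by positivity : (0:ℝ) ≤ a * Q ^ N)] at this
    · simpa using hw.const_mul ((Real.exp (qL Q Q))⁻¹ * (1 - Q)⁻¹)
  have := h0.add_const 1
  simpa using this

lemma qg_eq_exp (hQ0 : 0 < Q) (hQ1 : Q < 1) (ha0 : 0 ≤ a) (ha1 : a < 1) :
    qg Q (-a) = Real.exp (qL Q a) := by
  have hp := (hasProd_fac hQ0 hQ1 ha0 ha1).tendsto_prod_nat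
  have h1 : Tendsto (fun N : ℕ => (∏ j ∈ Finset.range N, (1 - a * Q ^ j)) *
      qg Q (-(a * Q ^ N))) atTop (nhds (Real.exp (qL Q a) * 1)) :=
    hp.mul (qg_tendsto hQ0 hQ1 ha0 ha1)
  have h2 : Tendsto (fun _ : ℕ => qg Q (-a)) atTop (nhds (qg Q (-a))) := tendsto_const_nhds
  have h3 := h2.congr fun N => qg_prod hQ0 hQ1 ha0 ha1 N
  have := tendsto_nhds_unique h3 h1
  rwa [mul_one] at this

end aux

/-- The q-number [t]_q = (1-q^t)/(1-q). -/
noncomputable def qNum (q t : ℝ) : ℝ := (1 - q ^ t) / (1 - q)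

/-- The q-analogue of the Pochhammer k-symbol [t]_{n,k} = ∏_{j=0}^{n-1} [t+jk]_q. -/
noncomputable def qkPochhammer (q : ℝ) (k : ℕ) (t : ℝ) (n : ℕ) : ℝ :=
  ∏ j ∈ Finset.range n, qNum q (t + (j : ℝ) * (k : ℝ))

/-- The q,k-gamma function
Γ_{q,k}(t) = (1-q)^(1-t/k) · ∏_{j=0}^∞ (1-q^{k(j+1)})/(1-q^{t+jk}). -/
noncomputable def qkGamma (q : ℝ) (k : ℕ) (t : ℝ) : ℝ :=
  (1 - q) ^ (1 - t / (k : ℝ)) *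
    ∏' j : ℕ, (1 - q ^ ((k : ℝ) * ((j : ℝ) + 1))) / (1 - q ^ (t + (j : ℝ) * (k : ℝ)))

/-- The Q-factorial [n]_Q! = ∏_{j=1}^n (1-Q^j)/(1-Q). -/
noncomputable def qFact (Q : ℝ) (n : ℕ) : ℝ :=
  ∏ j ∈ Finset.range n, (1 - Q ^ (j + 1)) / (1 - Q)

/-- The Q-exponential E_Q^x = ∑_{n=0}^∞ Q^{n(n-1)/2} x^n/[n]_Q!. -/
noncomputable def qExp (Q x : ℝ) : ℝ :=
  ∑' n : ℕ, Q ^ (n * (n - 1) / 2) * x ^ n / qFact Q n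

section bridge
variable {Q x : ℝ}

lemma qFact_eq (hQ0 : 0 < Q) (hQ1 : Q < 1) (n : ℕ) :
    qFact Q n = qc Q n / (1 - Q) ^ n := by
  rw [qFact, qc, Finset.prod_div_distrib, Finset.prod_const, Finset.card_range]
  congr 1
  exact Finset.prod_congr rfl fun j _ => by rw [pow_succ]; ring

lemma qExp_eq_qg (hQ0 : 0 < Q) (hQ1 : Q < 1) (x : ℝ) :
    qExp Q x = qg Q ((1 - Q) * x) := by
  rw [qExp, qg]
  apply tsum_congr; intro n
  rw [qFact_eq hQ0 hQ1 n]
  have h1 : qc Q n ≠ 0 := (qc_pos hQ0 hQ1 n).ne'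
  have h2 : (1 - Q) ≠ 0 := by linarith
  field_simp
  rw [mul_pow]
  ring

end bridge

theorem qkPochhammer_as_moment (q : ℝ) (hq0 : 0 < q) (hq1 : q < 1)
    (k : ℕ) (hk : 0 < k) (t : ℝ) (ht : 0 < t) (n : ℕ)
    (b : ℝ) (hb : b = qNum q (k : ℝ) ^ ((1 : ℝ) / (k : ℝ)) / (1 - q ^ k) ^ ((1 : ℝ) / (k : ℝ))) :
    qkPochhammer q k t n = (1 / qkGamma q k t) *
      ((1 - q) * b * ∑' m : ℕ, q ^ m * (q ^ m * b) ^ (t + (n : ℝ) * (k : ℝ) - 1) *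
        qExp (q ^ k) (-(q ^ k * (q ^ m * b) ^ k / qNum q (k : ℝ)))) := by
  have h1q : 0 < 1 - q := by linarith
  set Q : ℝ := q ^ k with hQdef
  have hQ0 : 0 < Q := pow_pos hq0 k
  have hQ1 : Q < 1 := pow_lt_one₀ hq0.le hq1 hk.ne'
  have h1Q : 0 < 1 - Q := by linarith
  have hkR : (0:ℝ) < (k:ℝ) := Nat.cast_pos.2 hk
  set s : ℝ := t + (n : ℝ) * (k : ℝ) with hsdef
  have hs0 : 0 < s := by positivity
  set z : ℝ := q ^ s with hzdef
  have hz0 : 0 < z := Real.rpow_pos_of_pos hq0 s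
  have hz1 : z < 1 := Real.rpow_lt_one hq0.le hq1 hs0
  set d : ℝ := Real.exp (qL Q Q) with hddef
  -- q-number at k
  have hqNum : qNum q (k : ℝ) = (1 - Q) / (1 - q) := by
    rw [qNum, Real.rpow_natCast]
  -- value of b
  have hbrep : b = (1 - q) ^ (-(1:ℝ) / (k:ℝ)) := by
    rw [hb, hqNum, Real.div_rpow h1Q.le h1q.le]
    have hA : (1 - Q) ^ ((1:ℝ)/(k:ℝ)) ≠ 0 := (Real.rpow_pos_of_pos h1Q _).ne'
    have hB : (1 - q) ^ ((1:ℝ)/(k:ℝ)) ≠ 0 := (Real.rpow_pos_of_pos h1q _).ne'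
    rw [neg_div, Real.rpow_neg h1q.le]
    field_simp
  have hb0 : 0 < b := by rw [hbrep]; exact Real.rpow_pos_of_pos h1q _
  have hbk : b ^ k = (1 - q)⁻¹ := by
    rw [hbrep, ← Real.rpow_natCast ((1 - q) ^ (-(1:ℝ)/(k:ℝ))) k, ← Real.rpow_mul h1q.le]
    rw [show (-(1:ℝ)/(k:ℝ)) * (k:ℝ) = -1 by field_simp]
    exact Real.rpow_neg_one _
  -- generic exponent: q ^ (j*k) = Q ^ j
  have hjk : ∀ j : ℕ, q ^ ((j:ℝ) * (k:ℝ)) = Q ^ j := by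
    intro j
    rw [show ((j:ℝ) * (k:ℝ)) = ((j * k : ℕ) : ℝ) by push_cast; ring,
      Real.rpow_natCast, mul_comm j k, pow_mul]
  -- the Gamma function in exp form
  have hGamma : ∀ u : ℝ, 0 < u →
      qkGamma q k u = (1 - q) ^ (1 - u / (k:ℝ)) * (d * (Real.exp (qL Q (q ^ u)))⁻¹) := by
    intro u hu
    have hu0 : (0:ℝ) ≤ q ^ u := (Real.rpow_pos_of_pos hq0 u).le
    have hu1 : q ^ u < 1 := Real.rpow_lt_one hq0.le hq1 hu
    rw [qkGamma]
    congr 1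
    have hterm : ∀ j : ℕ, (1 - q ^ ((k:ℝ) * ((j:ℝ) + 1))) / (1 - q ^ (u + (j:ℝ) * (k:ℝ)))
        = (1 - Q * Q ^ j) / (1 - q ^ u * Q ^ j) := by
      intro j
      have e1 : q ^ ((k:ℝ) * ((j:ℝ) + 1)) = Q * Q ^ j := by
        rw [show ((k:ℝ) * ((j:ℝ) + 1)) = ((k * (j + 1) : ℕ) : ℝ) by push_cast; ring,
          Real.rpow_natCast, pow_mul, pow_succ]
        ring
      have e2 : q ^ (u + (j:ℝ) * (k:ℝ)) = q ^ u * Q ^ j := by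
        rw [Real.rpow_add hq0, hjk j]
      rw [e1, e2]
    rw [tprod_congr hterm]
    have hpos : ∀ j : ℕ, 0 < (1 - Q * Q ^ j) / (1 - q ^ u * Q ^ j) := fun j =>
      div_pos (fac_pos hQ0 hQ1 hQ0.le hQ1 j) (fac_pos hQ0 hQ1 hu0 hu1 j)
    have hlog : (fun j : ℕ => Real.log ((1 - Q * Q ^ j) / (1 - q ^ u * Q ^ j)))
        = fun j : ℕ => Real.log (1 - Q * Q ^ j) - Real.log (1 - q ^ u * Q ^ j) :=
      funext fun j => Real.log_div (fac_pos hQ0 hQ1 hQ0.le hQ1 j).ne'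
        (fac_pos hQ0 hQ1 hu0 hu1 j).ne'
    have hsum : Summable fun j : ℕ => Real.log ((1 - Q * Q ^ j) / (1 - q ^ u * Q ^ j)) := by
      rw [hlog]
      exact (summable_logfac hQ0 hQ1 hQ0.le hQ1).sub (summable_logfac hQ0 hQ1 hu0 hu1)
    rw [(hasProd_exp _ hpos hsum).tprod_eq, hlog,
      Summable.tsum_sub (summable_logfac hQ0 hQ1 hQ0.le hQ1) (summable_logfac hQ0 hQ1 hu0 hu1)]
    rw [Real.exp_sub]
    rw [hddef, qL, qL, div_eq_mul_inv]
  -- Pochhammer in exp form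
  have ht0 : (0:ℝ) ≤ q ^ t := (Real.rpow_pos_of_pos hq0 t).le
  have ht1 : q ^ t < 1 := Real.rpow_lt_one hq0.le hq1 ht
  have hPoch : qkPochhammer q k t n
      = Real.exp (∑ j ∈ Finset.range n, Real.log (1 - q ^ t * Q ^ j)) / (1 - q) ^ n := by
    rw [qkPochhammer,
      show (∏ j ∈ Finset.range n, qNum q (t + (j:ℝ) * (k:ℝ)))
          = ∏ j ∈ Finset.range n, (1 - q ^ t * Q ^ j) / (1 - q) from
        Finset.prod_congr rfl fun j _ => by rw [qNum, Real.rpow_add hq0, hjk j],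
      Finset.prod_div_distrib, Finset.prod_const, Finset.card_range]
    congr 1
    rw [Real.exp_sum]
    exact Finset.prod_congr rfl fun j _ => (Real.exp_log (fac_pos hQ0 hQ1 ht0 ht1 j)).symm
  -- the integrand, term by term
  have hterm : ∀ m : ℕ,
      q ^ m * (q ^ m * b) ^ (s - 1) * qExp Q (-(Q * (q ^ m * b) ^ k / qNum q (k:ℝ)))
        = (b ^ (s - 1) * d) * (z ^ m / qc Q m) := by
    intro m
    have hargk : (q ^ m * b) ^ k = q ^ (m * k) * (1 - q)⁻¹ := by
      rw [mul_pow, ← pow_mul, hbk]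
    have harg : -(Q * (q ^ m * b) ^ k / qNum q (k:ℝ)) = -(Q ^ (m + 1) / (1 - Q)) := by
      rw [hargk, hqNum, hQdef]
      have e : q ^ (m * k) = (q ^ k) ^ m := by rw [mul_comm m k, pow_mul]
      rw [e]
      field_simp
      try ring
      try tauto
    have hQm1 : (0:ℝ) ≤ Q ^ (m + 1) := by positivity
    have hQm1' : Q ^ (m + 1) < 1 := pow_lt_one₀ hQ0.le hQ1 (by omega)
    have hexp : qExp Q (-(Q ^ (m + 1) / (1 - Q))) = d / qc Q m := by
      rw [qExp_eq_qg hQ0 hQ1,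
        show (1 - Q) * -(Q ^ (m + 1) / (1 - Q)) = -(Q ^ (m + 1)) by field_simp; try ring,
        qg_eq_exp hQ0 hQ1 hQm1 hQm1', eq_div_iff (qc_pos hQ0 hQ1 m).ne',
        show Q ^ (m + 1) = Q * Q ^ m by ring, hddef, d_eq hQ0 hQ1 m]
      ring
    have hfact : q ^ m * (q ^ m * b) ^ (s - 1) = z ^ m * b ^ (s - 1) := by
      rw [Real.mul_rpow (pow_nonneg hq0.le m) hb0.le, ← mul_assoc]
      congr 1
      have e0 : (q:ℝ) ^ m = q ^ ((m : ℕ) : ℝ) := (Real.rpow_natCast q m).symm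
      have e1 : ((q:ℝ) ^ m) ^ (s - 1) = q ^ (((m : ℕ) : ℝ) * (s - 1)) := by
        rw [e0, ← Real.rpow_mul hq0.le]
      rw [e1]
      nth_rewrite 1 [e0]
      rw [← Real.rpow_add hq0,
        show ((m : ℕ) : ℝ) + ((m : ℕ) : ℝ) * (s - 1) = s * ((m : ℕ) : ℝ) by ring,
        Real.rpow_mul hq0.le, Real.rpow_natCast]
    calc q ^ m * (q ^ m * b) ^ (s - 1) * qExp Q (-(Q * (q ^ m * b) ^ k / qNum q (k:ℝ)))
        = q ^ m * (q ^ m * b) ^ (s - 1) * qExp Q (-(Q ^ (m + 1) / (1 - Q))) := by rw [harg]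
      _ = (z ^ m * b ^ (s - 1)) * (d / qc Q m) := by rw [hfact, hexp]
      _ = (b ^ (s - 1) * d) * (z ^ m / qc Q m) := by ring
  -- the q-integral equals the Gamma function at s
  have hsum : ((1 - q) * b * ∑' m : ℕ, q ^ m * (q ^ m * b) ^ (s - 1) *
      qExp Q (-(Q * (q ^ m * b) ^ k / qNum q (k:ℝ)))) = qkGamma q k s := by
    rw [tsum_congr hterm, tsum_mul_left,
      show (∑' m : ℕ, z ^ m / qc Q m) = qF Q z from rfl,
      eq_inv_of_mul_eq_one_left (qF_mul_exp hQ0 hQ1 hz0.le hz1), hGamma s hs0]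
    have hbb : (1 - q) * (b * b ^ (s - 1)) = (1 - q) ^ (1 - s / (k:ℝ)) := by
      nth_rewrite 1 [← Real.rpow_one b]
      rw [← Real.rpow_add hb0, hbrep, ← Real.rpow_mul h1q.le]
      nth_rewrite 1 [← Real.rpow_one (1 - q)]
      rw [← Real.rpow_add h1q]
      congr 1
      field_simp
      ring
    rw [← hbb, ← hzdef]
    ring
  -- Gamma functional equation
  have hkey : qkGamma q k s = qkGamma q k t * qkPochhammer q k t n := by
    rw [hGamma s hs0, hGamma t ht, hPoch]
    have harg2 : (q ^ t) * Q ^ n = q ^ s := by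
      rw [hsdef, Real.rpow_add hq0, hjk n]
    rw [qL_shift hQ0 hQ1 ht0 ht1 n, harg2, Real.exp_add]
    have hAdiv : (1 - q) ^ (1 - t / (k:ℝ))
        = (1 - q) ^ (1 - s / (k:ℝ)) * (1 - q) ^ (n : ℕ) := by
      rw [show (1:ℝ) - t / (k:ℝ) = (1 - s / (k:ℝ)) + ((n : ℕ) : ℝ) by
          rw [hsdef]; field_simp; ring,
        Real.rpow_add h1q, Real.rpow_natCast]
    rw [hAdiv]
    have hE : Real.exp (∑ j ∈ Finset.range n, Real.log (1 - q ^ t * Q ^ j)) ≠ 0 :=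
      Real.exp_ne_zero _
    have h1qn : ((1 - q) ^ (n : ℕ) : ℝ) ≠ 0 := pow_ne_zero _ h1q.ne'
    field_simp
  have hGt : 0 < qkGamma q k t := by
    rw [hGamma t ht]
    have := Real.exp_pos (qL Q (q ^ t))
    positivity
  rw [hsum, hkey, one_div, ← mul_assoc, inv_mul_cancel₀ hGt.ne', one_mul]
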